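/- For every convex lattice polygon Γ ⊂ ℝ², the number of primitive integral directions, counted up to sign, achieving the minimal lattice width of Γ is at most 4. -/

import Mathlib

noncomputable section

/-- `p` is a lattice point of `ℤ² ⊂ ℝ²`. -/
def IsLat (p : ℝ × ℝ) : Prop := (∃ m : ℤ, p.1 = m) ∧ (∃ n : ℤ, p.2 = n)

/-- evaluation of the integral linear functional `h` at a point `p`. -/
def ev (h : ℤ × ℤ) (p : ℝ × ℝ) : ℝ := (h.1 : ℝ) * p.1 + (h.2 : ℝ) * p.2

/-- the maximum of `h` on `Γ`. -/
def maxW (Γ : Set (ℝ × ℝ)) (h : ℤ × ℤ) : ℝ := sSup (ev h '' Γ)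

/-- the minimum of `h` on `Γ`. -/
def minW (Γ : Set (ℝ × ℝ)) (h : ℤ × ℤ) : ℝ := sInf (ev h '' Γ)

/-- the width of `Γ` in direction `h`. -/
def width (Γ : Set (ℝ × ℝ)) (h : ℤ × ℤ) : ℝ := maxW Γ h - minW Γ h

/-- the adjoint polygon: convex hull of the interior lattice points of `Γ`. -/
def adjoint (Γ : Set (ℝ × ℝ)) : Set (ℝ × ℝ) :=
  convexHull ℝ {p | p ∈ interior Γ ∧ IsLat p}

/-- `h` is tight for `Γ` (max-tight and min-tight with respect to the adjoint). -/
def Tight (Γ : Set (ℝ × ℝ)) (h : ℤ × ℤ) : Prop :=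
  maxW Γ h = maxW (adjoint Γ) h + 1 ∧ minW Γ h = minW (adjoint Γ) h - 1

/-- the lattice width of `Γ`: minimal width over nonzero integral directions. -/
def latticeWidth (Γ : Set (ℝ × ℝ)) : ℝ := sInf (width Γ '' {h : ℤ × ℤ | h ≠ 0})

/-- a primitive integral direction. -/
def IsPrimitive (h : ℤ × ℤ) : Prop := Int.gcd h.1 h.2 = 1

/-- the set of optimal (minimal width) nonzero directions of `Γ`. -/
def optimalSet (Γ : Set (ℝ × ℝ)) : Set (ℤ × ℤ) :=
  {h | h ≠ 0 ∧ width Γ h = latticeWidth Γ}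

lemma ev_add (a b : ℤ × ℤ) (p : ℝ × ℝ) : ev (a + b) p = ev a p + ev b p := by
  unfold ev; push_cast [Prod.fst_add, Prod.snd_add]; ring

lemma ev_neg (a : ℤ × ℤ) (p : ℝ × ℝ) : ev (-a) p = - ev a p := by
  unfold ev; push_cast [Prod.fst_neg, Prod.snd_neg]; ring

lemma maxW_spec (S : Set (ℝ × ℝ)) (hfin : S.Finite) (hne : S.Nonempty) (h : ℤ × ℤ) :
    ∃ p ∈ convexHull ℝ S, maxW (convexHull ℝ S) h = ev h p ∧
      ∀ q ∈ convexHull ℝ S, ev h q ≤ ev h p := by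
  have hc : IsCompact (convexHull ℝ S) := hfin.isCompact_convexHull ℝ
  have hn : (convexHull ℝ S).Nonempty := hne.mono (subset_convexHull ℝ S)
  have hcont : ContinuousOn (ev h) (convexHull ℝ S) := by
    apply Continuous.continuousOn; unfold ev; fun_prop
  obtain ⟨p, hp, hm⟩ := hc.exists_isMaxOn hn hcont
  have hm' := isMaxOn_iff.mp hm
  refine ⟨p, hp, ?_, hm'⟩
  exact IsGreatest.csSup_eq ⟨⟨p, hp, rfl⟩, by rintro x ⟨q, hq, rfl⟩; exact hm' q hq⟩

lemma minW_spec (S : Set (ℝ × ℝ)) (hfin : S.Finite) (hne : S.Nonempty) (h : ℤ × ℤ) :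
    ∃ p ∈ convexHull ℝ S, minW (convexHull ℝ S) h = ev h p ∧
      ∀ q ∈ convexHull ℝ S, ev h p ≤ ev h q := by
  have hc : IsCompact (convexHull ℝ S) := hfin.isCompact_convexHull ℝ
  have hn : (convexHull ℝ S).Nonempty := hne.mono (subset_convexHull ℝ S)
  have hcont : ContinuousOn (ev h) (convexHull ℝ S) := by
    apply Continuous.continuousOn; unfold ev; fun_prop
  obtain ⟨p, hp, hm⟩ := hc.exists_isMinOn hn hcont
  have hm' := isMinOn_iff.mp hm
  refine ⟨p, hp, ?_, hm'⟩
  exact IsLeast.csInf_eq ⟨⟨p, hp, rfl⟩, by rintro x ⟨q, hq, rfl⟩; exact hm' q hq⟩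

lemma width_nonneg (S : Set (ℝ × ℝ)) (hfin : S.Finite) (hne : S.Nonempty) (h : ℤ × ℤ) :
    0 ≤ width (convexHull ℝ S) h := by
  obtain ⟨P, hP, hPe, hPu⟩ := maxW_spec S hfin hne h
  obtain ⟨Q, hQ, hQe, hQl⟩ := minW_spec S hfin hne h
  have := hPu Q hQ
  unfold width; rw [hPe, hQe]; linarith [hQl P hP]

lemma width_neg (S : Set (ℝ × ℝ)) (hfin : S.Finite) (hne : S.Nonempty) (a : ℤ × ℤ) :
    width (convexHull ℝ S) (-a) = width (convexHull ℝ S) a := by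
  obtain ⟨P, hP, hPe, hPu⟩ := maxW_spec S hfin hne a
  obtain ⟨Q, hQ, hQe, hQl⟩ := minW_spec S hfin hne a
  have hmax : maxW (convexHull ℝ S) (-a) = - minW (convexHull ℝ S) a := by
    have : IsGreatest (ev (-a) '' (convexHull ℝ S)) (ev (-a) Q) :=
      ⟨⟨Q, hQ, rfl⟩, by rintro x ⟨r, hr, rfl⟩; rw [ev_neg, ev_neg]; exact neg_le_neg (hQl r hr)⟩
    rw [maxW, this.csSup_eq, ev_neg, hQe]
  have hmin : minW (convexHull ℝ S) (-a) = - maxW (convexHull ℝ S) a := by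
    have : IsLeast (ev (-a) '' (convexHull ℝ S)) (ev (-a) P) :=
      ⟨⟨P, hP, rfl⟩, by rintro x ⟨r, hr, rfl⟩; rw [ev_neg, ev_neg]; exact neg_le_neg (hPu r hr)⟩
    rw [minW, this.csInf_eq, ev_neg, hPe]
  unfold width; rw [hmax, hmin]; ring

lemma width_add (S : Set (ℝ × ℝ)) (hfin : S.Finite) (hne : S.Nonempty) (a b : ℤ × ℤ) :
    width (convexHull ℝ S) (a + b) ≤ width (convexHull ℝ S) a + width (convexHull ℝ S) b := by
  obtain ⟨Pa, hPa, hPae, hPau⟩ := maxW_spec S hfin hne a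
  obtain ⟨Qa, hQa, hQae, hQal⟩ := minW_spec S hfin hne a
  obtain ⟨Pb, hPb, hPbe, hPbu⟩ := maxW_spec S hfin hne b
  obtain ⟨Qb, hQb, hQbe, hQbl⟩ := minW_spec S hfin hne b
  obtain ⟨P, hP, hPe, hPu⟩ := maxW_spec S hfin hne (a + b)
  obtain ⟨Q, hQ, hQe, hQl⟩ := minW_spec S hfin hne (a + b)
  unfold width
  rw [hPe, hQe, hPae, hQae, hPbe, hQbe, ev_add, ev_add]
  have h1 := hPau P hP
  have h2 := hPbu P hP
  have h3 := hQal Q hQ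
  have h4 := hQbl Q hQ
  linarith

lemma width_triple (S : Set (ℝ × ℝ)) (hfin : S.Finite) (hne : S.Nonempty) (z : ℤ × ℤ) :
    width (convexHull ℝ S) (z + z + z) = 3 * width (convexHull ℝ S) z := by
  obtain ⟨P, hP, hPe, hPu⟩ := maxW_spec S hfin hne z
  obtain ⟨Q, hQ, hQe, hQl⟩ := minW_spec S hfin hne z
  have hev : ∀ p, ev (z + z + z) p = 3 * ev z p := by
    intro p; rw [ev_add, ev_add]; ring
  have hmax : maxW (convexHull ℝ S) (z + z + z) = 3 * maxW (convexHull ℝ S) z := by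
    have : IsGreatest (ev (z+z+z) '' (convexHull ℝ S)) (ev (z+z+z) P) :=
      ⟨⟨P, hP, rfl⟩, by rintro x ⟨r, hr, rfl⟩; rw [hev, hev]; linarith [hPu r hr]⟩
    rw [maxW, this.csSup_eq, hev, hPe]
  have hmin : minW (convexHull ℝ S) (z + z + z) = 3 * minW (convexHull ℝ S) z := by
    have : IsLeast (ev (z+z+z) '' (convexHull ℝ S)) (ev (z+z+z) Q) :=
      ⟨⟨Q, hQ, rfl⟩, by rintro x ⟨r, hr, rfl⟩; rw [hev, hev]; linarith [hQl r hr]⟩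
    rw [minW, this.csInf_eq, hev, hQe]
  unfold width; rw [hmax, hmin]; ring

lemma lw_le (S : Set (ℝ × ℝ)) (hfin : S.Finite) (hne : S.Nonempty) (h : ℤ × ℤ) (h0 : h ≠ 0) :
    latticeWidth (convexHull ℝ S) ≤ width (convexHull ℝ S) h := by
  apply csInf_le
  · exact ⟨0, by rintro x ⟨g, _, rfl⟩; exact width_nonneg S hfin hne g⟩
  · exact ⟨h, h0, rfl⟩

lemma lw_nonneg (S : Set (ℝ × ℝ)) (hfin : S.Finite) (hne : S.Nonempty) :
    0 ≤ latticeWidth (convexHull ℝ S) := by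
  apply le_csInf
  · exact ⟨width (convexHull ℝ S) (1, 0), ⟨(1, 0), by simp, rfl⟩⟩
  · rintro x ⟨g, _, rfl⟩; exact width_nonneg S hfin hne g

lemma orth_lemma (m n a b c d : ℤ) (hmn : ¬(m = 0 ∧ n = 0))
    (h1 : a * m + b * n = 0) (h2 : c * m + d * n = 0)
    (hab : IsCoprime a b) (hcd : IsCoprime c d) :
    (a = c ∧ b = d) ∨ (a = -c ∧ b = -d) := by
  have hdet : a * d = b * c := by
    have e1 : (a * d - b * c) * m = 0 := by linear_combination d * h1 - b * h2
    have e2 : (a * d - b * c) * n = 0 := by linear_combination (-c) * h1 + a * h2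
    rcases not_and_or.mp hmn with hm | hn
    · rcases mul_eq_zero.mp e1 with h | h
      · linarith
      · exact absurd h hm
    · rcases mul_eq_zero.mp e2 with h | h
      · linarith
      · exact absurd h hn
  have hac : a ∣ c := hab.dvd_of_dvd_mul_left (by rw [← hdet]; exact dvd_mul_right a d)
  have hca : c ∣ a := hcd.dvd_of_dvd_mul_left (by rw [mul_comm d a, hdet]; exact dvd_mul_left c b)
  have hbd : b ∣ d := hab.symm.dvd_of_dvd_mul_left (by rw [hdet]; exact dvd_mul_right b c)
  have hdb : d ∣ b := hcd.symm.dvd_of_dvd_mul_left (by rw [mul_comm c b, ← hdet]; exact dvd_mul_left d a)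
  have ha : a = c ∨ a = -c := Int.natAbs_eq_natAbs_iff.mp
    (Nat.dvd_antisymm (Int.natAbs_dvd_natAbs.mpr hac) (Int.natAbs_dvd_natAbs.mpr hca))
  have hb : b = d ∨ b = -d := Int.natAbs_eq_natAbs_iff.mp
    (Nat.dvd_antisymm (Int.natAbs_dvd_natAbs.mpr hbd) (Int.natAbs_dvd_natAbs.mpr hdb))
  rcases ha with ha | ha <;> rcases hb with hb | hb
  · exact Or.inl ⟨ha, hb⟩
  · -- a = c, b = -d
    subst ha hb
    have hsum : a * d + d * a = 0 := by linear_combination hdet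
    have h0 : a * d = 0 := by linarith [mul_comm a d]
    rcases mul_eq_zero.mp h0 with h | h
    · exact Or.inr ⟨by omega, rfl⟩
    · exact Or.inl ⟨rfl, by omega⟩
  · -- a = -c, b = d
    subst ha hb
    have hsum : c * b + b * c = 0 := by linear_combination -hdet
    have h0 : c * b = 0 := by linarith [mul_comm c b]
    rcases mul_eq_zero.mp h0 with h | h
    · exact Or.inl ⟨by omega, rfl⟩
    · exact Or.inr ⟨rfl, by omega⟩
  · exact Or.inr ⟨ha, hb⟩

lemma width_inj (S : Set (ℝ × ℝ)) (hfin : S.Finite) (hne : S.Nonempty)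
    (hpos : 0 < latticeWidth (convexHull ℝ S)) (a b : ℤ × ℤ)
    (ha : width (convexHull ℝ S) a = latticeWidth (convexHull ℝ S))
    (hb : width (convexHull ℝ S) b = latticeWidth (convexHull ℝ S))
    (h1 : (3 : ℤ) ∣ a.1 - b.1) (h2 : (3 : ℤ) ∣ a.2 - b.2) : a = b := by
  by_contra hab
  set z : ℤ × ℤ := ((a.1 - b.1) / 3, (a.2 - b.2) / 3) with hz
  have hz3 : a - b = z + z + z := by
    have e1 := Int.mul_ediv_add_emod (a.1 - b.1) 3
    have e2 := Int.mul_ediv_add_emod (a.2 - b.2) 3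
    refine Prod.ext ?_ ?_ <;> simp [hz, Prod.fst_sub, Prod.snd_sub] <;> omega
  have hz0 : z ≠ 0 := by
    intro h0
    apply hab
    have h01 := congrArg Prod.fst h0
    have h02 := congrArg Prod.snd h0
    simp only [hz, Prod.fst_zero, Prod.snd_zero] at h01 h02
    refine Prod.ext ?_ ?_ <;> omega
  have hw1 : latticeWidth (convexHull ℝ S) ≤ width (convexHull ℝ S) z := lw_le S hfin hne z hz0
  have hw2 : width (convexHull ℝ S) (a - b) ≤ 2 * latticeWidth (convexHull ℝ S) := by
    have := width_add S hfin hne a (-b)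
    rw [width_neg S hfin hne b] at this
    have heq : a - b = a + -b := sub_eq_add_neg a b
    rw [heq]; linarith
  rw [hz3, width_triple S hfin hne z] at hw2
  linarith


/-- a convex lattice polygon with more than one point has at most 4
primitive optimal directions counted up to sign. -/
theorem stmt_7 (S : Set (ℝ × ℝ)) (hfin : S.Finite) (hne : S.Nonempty)
    (hlat : ∀ p ∈ S, IsLat p)
    (htwo : ∃ p ∈ S, ∃ q ∈ S, p ≠ q) :
    ∃ T : Finset (ℤ × ℤ), T.card ≤ 4 ∧
      ∀ h : ℤ × ℤ, IsPrimitive h →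
        width (convexHull ℝ S) h = latticeWidth (convexHull ℝ S) →
        h ∈ T ∨ -h ∈ T := by
  classical
  by_cases hpos : 0 < latticeWidth (convexHull ℝ S)
  · -- positive width: mod 3 argument
    set C : Finset (ZMod 3 × ZMod 3) := {(1,0),(0,1),(1,1),(1,2)} with hC
    set f : ℤ × ℤ → ZMod 3 × ZMod 3 := fun g => ((g.1 : ZMod 3), (g.2 : ZMod 3)) with hf
    set pick : ZMod 3 × ZMod 3 → ℤ × ℤ := fun c =>
      if H : ∃ g : ℤ × ℤ, width (convexHull ℝ S) g = latticeWidth (convexHull ℝ S) ∧ f g = c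
      then H.choose else 0 with hpickdef
    refine ⟨Finset.image pick C, le_trans Finset.card_image_le (by decide), ?_⟩
    intro h hprim hopt
    -- key: any optimal g with f g ∈ C lies in the image
    have key : ∀ g : ℤ × ℤ, width (convexHull ℝ S) g = latticeWidth (convexHull ℝ S) →
        f g ∈ C → g ∈ Finset.image pick C := by
      intro g hg hgC
      have H : ∃ g' : ℤ × ℤ, width (convexHull ℝ S) g' = latticeWidth (convexHull ℝ S) ∧
          f g' = f g := ⟨g, hg, rfl⟩
      have hpe : pick (f g) = H.choose := dif_pos H
      obtain ⟨hw', hfeq⟩ := H.choose_spec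
      have hd1 : (3 : ℤ) ∣ H.choose.1 - g.1 := by
        have := congrArg Prod.fst hfeq
        simp only [hf] at this
        exact_mod_cast ((ZMod.intCast_eq_intCast_iff _ _ _).mp this.symm).dvd
      have hd2 : (3 : ℤ) ∣ H.choose.2 - g.2 := by
        have := congrArg Prod.snd hfeq
        simp only [hf] at this
        exact_mod_cast ((ZMod.intCast_eq_intCast_iff _ _ _).mp this.symm).dvd
      have : H.choose = g := width_inj S hfin hne hpos _ _ hw' hg hd1 hd2
      exact Finset.mem_image.mpr ⟨f g, hgC, by rw [hpe, this]⟩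
    have hfh0 : f h ≠ 0 := by
      intro h0
      have d1 : (3 : ℤ) ∣ h.1 := by
        have := congrArg Prod.fst h0
        simpa only [hf, Prod.fst_zero, ZMod.intCast_zmod_eq_zero_iff_dvd, Nat.cast_ofNat] using this
      have d2 : (3 : ℤ) ∣ h.2 := by
        have := congrArg Prod.snd h0
        simpa only [hf, Prod.snd_zero, ZMod.intCast_zmod_eq_zero_iff_dvd, Nat.cast_ofNat] using this
      have : (3 : ℤ) ∣ (Int.gcd h.1 h.2 : ℤ) := Int.dvd_coe_gcd d1 d2
      rw [hprim] at this
      norm_num at this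
    have cover : ∀ c : ZMod 3 × ZMod 3, c ≠ 0 → c ∈ C ∨ -c ∈ C := by decide
    have hfneg : f (-h) = -(f h) := by
      simp only [hf, Prod.fst_neg, Prod.snd_neg, Int.cast_neg, Prod.neg_mk]
    rcases cover (f h) hfh0 with hc | hc
    · exact Or.inl (key h hopt hc)
    · refine Or.inr (key (-h) ?_ ?_)
      · rw [width_neg S hfin hne h]; exact hopt
      · rw [hfneg]; exact hc
  · -- width zero: all optimal directions orthogonal to a fixed nonzero vector
    obtain ⟨p, hp, q, hq, hpq⟩ := htwo
    obtain ⟨⟨pm, hpm⟩, ⟨pn, hpn⟩⟩ := hlat p hp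
    obtain ⟨⟨qm, hqm⟩, ⟨qn, hqn⟩⟩ := hlat q hq
    set m : ℤ := qm - pm with hm
    set n : ℤ := qn - pn with hn
    have hmn : ¬(m = 0 ∧ n = 0) := by
      rintro ⟨h1, h2⟩
      apply hpq
      have e1 : pm = qm := by omega
      have e2 : pn = qn := by omega
      refine Prod.ext ?_ ?_
      · rw [hpm, hqm, e1]
      · rw [hpn, hqn, e2]
    have orth : ∀ h : ℤ × ℤ, width (convexHull ℝ S) h = latticeWidth (convexHull ℝ S) →
        h.1 * m + h.2 * n = 0 := by
      intro h hopt
      obtain ⟨P, hP, hPe, hPu⟩ := maxW_spec S hfin hne h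
      obtain ⟨Q, hQ, hQe, hQl⟩ := minW_spec S hfin hne h
      have hw0 : width (convexHull ℝ S) h = 0 :=
        le_antisymm (by push_neg at hpos; rw [hopt]; exact le_of_not_gt (by push_neg; exact hpos))
          (width_nonneg S hfin hne h)
      have heq : ev h P = ev h Q := by
        have : maxW (convexHull ℝ S) h - minW (convexHull ℝ S) h = 0 := hw0
        rw [hPe, hQe] at this; linarith
      have hpΓ : p ∈ convexHull ℝ S := subset_convexHull ℝ S hp
      have hqΓ : q ∈ convexHull ℝ S := subset_convexHull ℝ S hq
      have hpv : ev h p = ev h q := by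
        have := hPu p hpΓ; have := hQl p hpΓ
        have := hPu q hqΓ; have := hQl q hqΓ
        linarith [heq]
      have : ((h.1 * m + h.2 * n : ℤ) : ℝ) = 0 := by
        rw [hm, hn]
        unfold ev at hpv
        rw [hpm, hpn, hqm, hqn] at hpv
        push_cast
        linear_combination -hpv
      exact_mod_cast this
    by_cases Hex : ∃ g : ℤ × ℤ, IsPrimitive g ∧
        width (convexHull ℝ S) g = latticeWidth (convexHull ℝ S)
    · obtain ⟨g₀, hg₀p, hg₀w⟩ := Hex
      refine ⟨{g₀}, by simp, ?_⟩
      intro h hprim hopt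
      have hcop1 : IsCoprime h.1 h.2 := Int.isCoprime_iff_gcd_eq_one.mpr hprim
      have hcop2 : IsCoprime g₀.1 g₀.2 := Int.isCoprime_iff_gcd_eq_one.mpr hg₀p
      rcases orth_lemma m n h.1 h.2 g₀.1 g₀.2 hmn (orth h hopt) (orth g₀ hg₀w) hcop1 hcop2 with
        ⟨e1, e2⟩ | ⟨e1, e2⟩
      · exact Or.inl (Finset.mem_singleton.mpr (Prod.ext e1 e2))
      · refine Or.inr (Finset.mem_singleton.mpr ?_)
        refine Prod.ext ?_ ?_
        · simp [Prod.fst_neg]; omega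
        · simp [Prod.snd_neg]; omega
    · exact ⟨∅, by simp, fun h hprim hopt => absurd ⟨h, hprim, hopt⟩ Hex⟩
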